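/- Let P ⊂ ℝ^d be a polytope and let E ⊂ ℝ^d be a finite set containing a direction of every edge of P. Then the zonotope Z = zone(E) = Σ_{e ∈ E}[-e, e] is a refinement of P: every normal cone of Z at a vertex of Z is contained in the normal cone of P at some vertex of P. -/

import Mathlib

namespace Stmt13Aux

variable {d : ℕ}

/-- The standard pairing. -/
def B (g x : Fin d → ℝ) : ℝ := ∑ i, g i * x i

lemma B_comm (g x : Fin d → ℝ) : B g x = B x g := by
  simp [B, mul_comm]

lemma B_add_right (g x y : Fin d → ℝ) : B g (x + y) = B g x + B g y := by
  simp [B, mul_add, Finset.sum_add_distrib]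

lemma B_smul_right (g : Fin d → ℝ) (c : ℝ) (x : Fin d → ℝ) : B g (c • x) = c * B g x := by
  simp [B, Finset.mul_sum, mul_left_comm]

lemma B_sub_right (g x y : Fin d → ℝ) : B g (x - y) = B g x - B g y := by
  simp [B, mul_sub, Finset.sum_sub_distrib]

lemma B_add_left (g g' x : Fin d → ℝ) : B (g + g') x = B g x + B g' x := by
  rw [B_comm, B_add_right, B_comm x g, B_comm x g']

lemma B_smul_left (c : ℝ) (g x : Fin d → ℝ) : B (c • g) x = c * B g x := by
  rw [B_comm, B_smul_right, B_comm x g]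

lemma B_sub_left (g g' x : Fin d → ℝ) : B (g - g') x = B g x - B g' x := by
  rw [B_comm, B_sub_right, B_comm x g, B_comm x g']

lemma B_neg_left (g x : Fin d → ℝ) : B (-g) x = - B g x := by
  have := B_sub_left 0 g x
  simpa [B] using this

lemma B_sum_right {ι : Type*} (g : Fin d → ℝ) (t : Finset ι) (f : ι → Fin d → ℝ) :
    B g (∑ y ∈ t, f y) = ∑ y ∈ t, B g (f y) := by
  simp only [B, Finset.sum_apply, Finset.mul_sum]
  exact Finset.sum_comm

lemma B_self_nonneg (w : Fin d → ℝ) : 0 ≤ B w w :=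
  Finset.sum_nonneg fun i _ => mul_self_nonneg _

lemma eq_zero_of_B_self (w : Fin d → ℝ) (h : B w w = 0) : w = 0 := by
  funext i
  have := (Finset.sum_eq_zero_iff_of_nonneg (fun i _ => mul_self_nonneg (w i))).1 h i
    (Finset.mem_univ i)
  exact mul_self_eq_zero.1 this

lemma continuous_B_left (x : Fin d → ℝ) : Continuous fun g : Fin d → ℝ => B g x := by
  unfold B
  exact continuous_finset_sum _ fun i _ => (continuous_apply i).mul continuous_const

lemma hull_le {F : Finset (Fin d → ℝ)} {g : Fin d → ℝ} {M : ℝ} (hM : ∀ y ∈ F, B g y ≤ M)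
    {x : Fin d → ℝ} (hx : x ∈ convexHull ℝ (F : Set (Fin d → ℝ))) : B g x ≤ M := by
  obtain ⟨w, hw0, hw1, hwx⟩ := Finset.mem_convexHull'.1 hx
  calc B g x = ∑ y ∈ F, w y * B g y := by
        rw [← hwx, B_sum_right]
        exact Finset.sum_congr rfl fun y _ => B_smul_right _ _ _
    _ ≤ ∑ y ∈ F, w y * M :=
        Finset.sum_le_sum fun y hy => mul_le_mul_of_nonneg_left (hM y hy) (hw0 y hy)
    _ = M := by rw [← Finset.sum_mul, hw1, one_mul]

lemma B_hull_repr {F : Finset (Fin d → ℝ)} {g x : Fin d → ℝ} {w : (Fin d → ℝ) → ℝ}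
    (hwx : ∑ y ∈ F, w y • y = x) : B g x = ∑ y ∈ F, w y * B g y := by
  rw [← hwx, B_sum_right]
  exact Finset.sum_congr rfl fun y _ => B_smul_right _ _ _

lemma faceHull {F S : Finset (Fin d → ℝ)} {g : Fin d → ℝ} {M : ℝ}
    (hM : ∀ y ∈ F, B g y ≤ M) (hS : ∀ y, y ∈ S ↔ (y ∈ F ∧ B g y = M)) :
    {x ∈ convexHull ℝ (F : Set (Fin d → ℝ)) | B g x = M}
      = convexHull ℝ (S : Set (Fin d → ℝ)) := by
  have hSF : S ⊆ F := fun y hy => ((hS y).1 hy).1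
  apply Set.Subset.antisymm
  · rintro x ⟨hx, hxM⟩
    obtain ⟨w, hw0, hw1, hwx⟩ := Finset.mem_convexHull'.1 hx
    have hzero : ∀ y ∈ F, y ∉ S → w y = 0 := by
      intro y hyF hyS
      by_contra hw
      have hpos : 0 < w y := (hw0 y hyF).lt_of_ne (Ne.symm hw)
      have hlt : B g y < M :=
        (hM y hyF).lt_of_ne (fun h => hyS ((hS y).2 ⟨hyF, h⟩))
      have : B g x < M := by
        calc B g x = ∑ z ∈ F, w z * B g z := B_hull_repr hwx
          _ < ∑ z ∈ F, w z * M := by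
              refine Finset.sum_lt_sum
                (fun z hz => mul_le_mul_of_nonneg_left (hM z hz) (hw0 z hz))
                ⟨y, hyF, by exact mul_lt_mul_of_pos_left hlt hpos⟩
          _ = M := by rw [← Finset.sum_mul, hw1, one_mul]
      exact absurd hxM (ne_of_lt this)
    refine Finset.mem_convexHull'.2 ⟨w, fun y hy => hw0 y (hSF hy), ?_, ?_⟩
    · rw [Finset.sum_subset hSF (fun y hy hyn => hzero y hy hyn)]
      exact hw1
    · rw [Finset.sum_subset hSF (fun y hy hyn => by rw [hzero y hy hyn, zero_smul])]
      exact hwx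
  · intro x hx
    refine ⟨convexHull_mono (by exact_mod_cast hSF) hx, ?_⟩
    have h1 : B g x ≤ M := hull_le (fun y hy => ((hS y).1 hy).2.le) hx
    have h2 : B (-g) x ≤ -M := hull_le (fun y hy => by
      rw [B_neg_left, ((hS y).1 hy).2]) hx
    rw [B_neg_left] at h2
    linarith

lemma face_isExtreme {F S : Finset (Fin d → ℝ)} {g : Fin d → ℝ} {M : ℝ}
    (hM : ∀ y ∈ F, B g y ≤ M) (hS : ∀ y, y ∈ S ↔ (y ∈ F ∧ B g y = M)) :
    IsExtreme ℝ (convexHull ℝ (F : Set (Fin d → ℝ))) (convexHull ℝ (S : Set (Fin d → ℝ))) := by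
  have hface := faceHull hM hS
  constructor
  · exact convexHull_mono (by exact_mod_cast fun y hy => ((hS y).1 hy).1)
  · rintro x₁ hx₁ x₂ hx₂ y hyS ⟨a, b, ha, hb, hab, hy⟩
    have hyM : B g y = M := by
      rw [← hface] at hyS; exact hyS.2
    have h1 : B g x₁ ≤ M := hull_le hM hx₁
    have h2 : B g x₂ ≤ M := hull_le hM hx₂
    have hcomb : a * B g x₁ + b * B g x₂ = M := by
      rw [← hyM, ← hy, B_add_right, B_smul_right, B_smul_right]
    have hM' : a * M + b * M = M := by rw [← add_mul, hab, one_mul]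
    have e1 : B g x₁ = M := by
      by_contra hne
      have hlt := lt_of_le_of_ne h1 hne
      have hb2 : b * B g x₂ ≤ b * M := mul_le_mul_of_nonneg_left h2 hb.le
      have ha1 : a * B g x₁ < a * M := mul_lt_mul_of_pos_left hlt ha
      linarith
    have e2 : B g x₂ = M := by
      by_contra hne
      have hlt := lt_of_le_of_ne h2 hne
      have hb2 : a * B g x₁ ≤ a * M := mul_le_mul_of_nonneg_left h1 ha.le
      have ha1 : b * B g x₂ < b * M := mul_lt_mul_of_pos_left hlt hb
      linarith
    rw [← hface]; exact ⟨hx₁, e1⟩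

lemma strict_hull {A : Finset (Fin d → ℝ)} {a h : Fin d → ℝ} (ha : a ∈ A)
    (hs : ∀ b ∈ A, b ≠ a → B h b < B h a) :
    ∀ x ∈ convexHull ℝ (A : Set (Fin d → ℝ)), x ≠ a → B h x < B h a := by
  intro x hx hxa
  obtain ⟨w, hw0, hw1, hwx⟩ := Finset.mem_convexHull'.1 hx
  have hM : ∀ y ∈ A, B h y ≤ B h a := by
    intro y hy
    rcases eq_or_ne y a with rfl | hne
    · exact le_rfl
    · exact (hs y hy hne).le
  rcases Classical.em (∃ y ∈ A, y ≠ a ∧ 0 < w y) with ⟨y, hyA, hyne, hypos⟩ | hnone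
  · calc B h x = ∑ z ∈ A, w z * B h z := B_hull_repr hwx
      _ < ∑ z ∈ A, w z * B h a := by
          refine Finset.sum_lt_sum
            (fun z hz => mul_le_mul_of_nonneg_left (hM z hz) (hw0 z hz))
            ⟨y, hyA, mul_lt_mul_of_pos_left (hs y hyA hyne) hypos⟩
      _ = B h a := by rw [← Finset.sum_mul, hw1, one_mul]
  · exfalso
    apply hxa
    push_neg at hnone
    have hw' : ∀ y ∈ A, y ≠ a → w y = 0 := by
      intro y hy hne
      exact le_antisymm (hnone y hy hne) (hw0 y hy)
    have : ∑ y ∈ A, w y • y = w a • a := by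
      refine Finset.sum_eq_single a (fun y hy hne => by rw [hw' y hy hne, zero_smul]) ?_
      intro hnA; exact absurd ha hnA
    have hwa : w a = 1 := by
      have hsum' : ∑ y ∈ A, w y = w a :=
        Finset.sum_eq_single a (fun y hy hne => hw' y hy hne) (fun hnA => absurd ha hnA)
      rw [hsum'] at hw1; exact hw1
    rw [← hwx, this, hwa, one_smul]

lemma extreme_of_strict {P : Set (Fin d → ℝ)} {a h : Fin d → ℝ} (haP : a ∈ P)
    (hs : ∀ x ∈ P, x ≠ a → B h x < B h a) : a ∈ Set.extremePoints ℝ P := by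
  refine ⟨haP, ?_⟩
  rintro x₁ hx₁ x₂ hx₂ ⟨t₁, t₂, ht₁, ht₂, hsum, hcomb⟩
  have key : ∀ y₁ ∈ P, ∀ y₂ ∈ P, ∀ s₁ s₂ : ℝ, 0 < s₁ → 0 < s₂ → s₁ + s₂ = 1 →
      s₁ • y₁ + s₂ • y₂ = a → y₁ = a := by
    intro y₁ hy₁ y₂ hy₂ s₁ s₂ hs₁ hs₂ hssum hc
    by_contra hne
    have h1 : B h y₁ < B h a := hs y₁ hy₁ hne
    have h2 : B h y₂ ≤ B h a := by
      rcases eq_or_ne y₂ a with rfl | hne2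
      · exact le_rfl
      · exact (hs y₂ hy₂ hne2).le
    have : B h a = s₁ * B h y₁ + s₂ * B h y₂ := by
      rw [← hc, B_add_right, B_smul_right, B_smul_right]
    have h3 : s₁ * B h y₁ < s₁ * B h a := mul_lt_mul_of_pos_left h1 hs₁
    have h4 : s₂ * B h y₂ ≤ s₂ * B h a := mul_le_mul_of_nonneg_left h2 hs₂.le
    have h5 : s₁ * B h a + s₂ * B h a = B h a := by rw [← add_mul, hssum, one_mul]
    linarith
  exact key x₁ hx₁ x₂ hx₂ t₁ t₂ ht₁ ht₂ hsum hcomb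

lemma preconnected_subset_of_disjoint_open {X : Type*} [TopologicalSpace X] {s : Set X}
    (hs : IsPreconnected s) {ι : Type*} (I : Finset ι) (U : ι → Set X)
    (hopen : ∀ i ∈ I, IsOpen (U i))
    (hdisj : ∀ i ∈ I, ∀ j ∈ I, i ≠ j → Disjoint (U i) (U j))
    (hcov : s ⊆ ⋃ i ∈ I, U i) {i₀ : ι} (hi₀ : i₀ ∈ I) (hne : (s ∩ U i₀).Nonempty) :
    s ⊆ U i₀ := by
  classical
  set V : Set X := ⋃ i ∈ I.erase i₀, U i with hV
  have hVopen : IsOpen V :=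
    isOpen_biUnion fun i hi => hopen i (Finset.mem_of_mem_erase hi)
  have hdisjUV : Disjoint (U i₀) V := by
    refine Set.disjoint_left.2 fun x hx hxV => ?_
    obtain ⟨i, hi, hxi⟩ := Set.mem_iUnion₂.1 hxV
    exact Set.disjoint_left.1
      (hdisj i₀ hi₀ i (Finset.mem_of_mem_erase hi) (Finset.ne_of_mem_erase hi).symm) hx hxi
  have hsub : s ⊆ U i₀ ∪ V := by
    intro x hx
    obtain ⟨i, hi, hxi⟩ := Set.mem_iUnion₂.1 (hcov hx)
    rcases eq_or_ne i i₀ with rfl | hne'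
    · exact Or.inl hxi
    · exact Or.inr (Set.mem_iUnion₂.2 ⟨i, Finset.mem_erase.2 ⟨hne', hi⟩, hxi⟩)
  exact hs.subset_left_of_subset_union (hopen i₀ hi₀) hVopen hdisjUV hsub hne


lemma path_strictMax {F : Finset (Fin d → ℝ)} (hF : F.Nonempty) (gL gR : Fin d → ℝ)
    (hnotie : ∀ t ∈ Set.Icc (0:ℝ) 1, ∀ x ∈ F, ∀ y ∈ F, x ≠ y →
      B ((1-t) • gL + t • gR) x = B ((1-t) • gL + t • gR) y →
      ¬ (∀ z ∈ F, B ((1-t) • gL + t • gR) z ≤ B ((1-t) • gL + t • gR) x)) :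
    ∃ w ∈ F, (∀ x ∈ F, x ≠ w → B gL x < B gL w) ∧ (∀ x ∈ F, x ≠ w → B gR x < B gR w) := by
  classical
  set G : ℝ → Fin d → ℝ := fun t => (1-t) • gL + t • gR with hG
  have hcont : ∀ z : Fin d → ℝ, Continuous fun t => B (G t) z := by
    intro z
    have : (fun t => B (G t) z) = fun t => (1-t) * B gL z + t * B gR z := by
      funext t
      rw [hG]
      rw [B_add_left, B_smul_left, B_smul_left]
    rw [this]
    continuity
  set U : (Fin d → ℝ) → Set ℝ :=
    fun w => ⋂ x ∈ F.erase w, {t : ℝ | B (G t) x < B (G t) w} with hU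
  have hmemU : ∀ w t, t ∈ U w ↔ ∀ x ∈ F, x ≠ w → B (G t) x < B (G t) w := by
    intro w t
    simp only [hU, Set.mem_iInter, Set.mem_setOf_eq, Finset.mem_erase]
    exact ⟨fun h x hx hne => h x ⟨hne, hx⟩, fun h x hx => h x hx.2 hx.1⟩
  have hopen : ∀ w ∈ F, IsOpen (U w) := by
    intro w _
    exact isOpen_biInter_finset fun x _ => isOpen_lt (hcont x) (hcont w)
  have hdisj : ∀ w ∈ F, ∀ w' ∈ F, w ≠ w' → Disjoint (U w) (U w') := by
    intro w hw w' hw' hne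
    refine Set.disjoint_left.2 fun t ht ht' => ?_
    exact lt_asymm ((hmemU w t).1 ht w' hw' (Ne.symm hne)) ((hmemU w' t).1 ht' w hw hne)
  have hstep : ∀ t ∈ Set.Icc (0:ℝ) 1, ∃ w ∈ F, t ∈ U w := by
    intro t ht
    obtain ⟨w, hwF, hwmax⟩ := F.exists_max_image (fun z => B (G t) z) hF
    refine ⟨w, hwF, (hmemU w t).2 fun x hx hne => ?_⟩
    rcases lt_or_eq_of_le (hwmax x hx) with h | h
    · exact h
    · exact absurd hwmax (hnotie t ht w hwF x hx (fun he => hne he.symm) h.symm)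
  obtain ⟨w₀, hw₀F, hw₀⟩ := hstep 0 ⟨le_rfl, zero_le_one⟩
  have hsub : Set.Icc (0:ℝ) 1 ⊆ U w₀ := by
    refine preconnected_subset_of_disjoint_open isPreconnected_Icc F U hopen hdisj ?_ hw₀F
      ⟨0, ⟨le_rfl, zero_le_one⟩, hw₀⟩
    intro t ht
    obtain ⟨w, hwF, hw⟩ := hstep t ht
    exact Set.mem_biUnion hwF hw
  have hG0 : G 0 = gL := by simp [hG]
  have hG1 : G 1 = gR := by simp [hG]
  have h0 := (hmemU w₀ 0).1 (hsub ⟨le_rfl, zero_le_one⟩)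
  have h1 := (hmemU w₀ 1).1 (hsub ⟨zero_le_one, le_rfl⟩)
  rw [hG0] at h0
  rw [hG1] at h1
  exact ⟨w₀, hw₀F, h0, h1⟩

lemma edge_exists : ∀ (n : ℕ) (F : Finset (Fin d → ℝ)), F.card ≤ n →
    ∀ a ∈ F, ∀ b ∈ F, a ≠ b →
    ∃ p q : Fin d → ℝ, p ≠ q ∧
      IsExtreme ℝ (convexHull ℝ (F : Set (Fin d → ℝ))) (segment ℝ p q) := by
  intro n
  induction n with
  | zero =>
    intro F hF a ha b _ _
    rw [Nat.le_zero, Finset.card_eq_zero] at hF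
    exact absurd ha (hF ▸ Finset.notMem_empty a)
  | succ n ih =>
    classical
    intro F hcard a ha b hb hab
    by_cases hline : ∀ c ∈ F, ∃ t : ℝ, c = a + t • (b - a)
    · -- collinear case : the hull is itself a segment
      have hv : b - a ≠ 0 := sub_ne_zero.2 (Ne.symm hab)
      obtain ⟨j, hj⟩ := Function.ne_iff.1 hv
      rw [Pi.zero_apply, Pi.sub_apply] at hj
      set τ : (Fin d → ℝ) → ℝ := fun x => (x j - a j) / (b j - a j) with hτ
      have key : ∀ x ∈ F, x = a + τ x • (b - a) := by
        intro x hx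
        obtain ⟨t, ht⟩ := hline x hx
        have hτx : τ x = t := by
          rw [hτ]
          simp only [ht, Pi.add_apply, Pi.smul_apply, Pi.sub_apply, smul_eq_mul,
            add_sub_cancel_left]
          rw [mul_div_assoc, div_self hj, mul_one]
        rw [hτx]; exact ht
      have hτa : τ a = 0 := by simp [hτ]
      have hτb : τ b = 1 := by rw [hτ]; exact div_self hj
      obtain ⟨p, hp, hpmin⟩ := F.exists_min_image τ ⟨a, ha⟩
      obtain ⟨q, hq, hqmax⟩ := F.exists_max_image τ ⟨a, ha⟩
      have hpq : τ p < τ q := by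
        calc τ p ≤ τ a := hpmin a ha
          _ = 0 := hτa
          _ < 1 := zero_lt_one
          _ = τ b := hτb.symm
          _ ≤ τ q := hqmax b hb
      have hne : p ≠ q := fun h => absurd hpq (by rw [h]; exact lt_irrefl _)
      have hΔ : 0 < τ q - τ p := sub_pos.2 hpq
      have hseg : convexHull ℝ (F : Set (Fin d → ℝ)) = segment ℝ p q := by
        apply Set.Subset.antisymm
        · apply convexHull_min _ (convex_segment p q)
          intro x hx
          refine ⟨(τ q - τ x) / (τ q - τ p), (τ x - τ p) / (τ q - τ p),
            div_nonneg (sub_nonneg.2 (hqmax x hx)) hΔ.le,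
            div_nonneg (sub_nonneg.2 (hpmin x hx)) hΔ.le, ?_, ?_⟩
          · field_simp; ring
          · have hc2 : (τ q - τ x) / (τ q - τ p) * τ p + (τ x - τ p) / (τ q - τ p) * τ q
                = τ x := by field_simp; ring
            have hc1 : (τ q - τ x) / (τ q - τ p) + (τ x - τ p) / (τ q - τ p) = 1 := by
              field_simp; ring
            calc ((τ q - τ x) / (τ q - τ p)) • p + ((τ x - τ p) / (τ q - τ p)) • q
                = ((τ q - τ x) / (τ q - τ p)) • (a + τ p • (b - a))
                  + ((τ x - τ p) / (τ q - τ p)) • (a + τ q • (b - a)) := by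
                  rw [← key p hp, ← key q hq]
              _ = ((τ q - τ x) / (τ q - τ p) + (τ x - τ p) / (τ q - τ p)) • a
                  + ((τ q - τ x) / (τ q - τ p) * τ p
                      + (τ x - τ p) / (τ q - τ p) * τ q) • (b - a) := by
                  module
              _ = a + τ x • (b - a) := by rw [hc1, hc2, one_smul]
              _ = x := (key x hx).symm
        · exact (convex_convexHull ℝ _).segment_subset
            (subset_convexHull ℝ _ hp) (subset_convexHull ℝ _ hq)
      refine ⟨p, q, hne, ?_⟩
      rw [hseg]
    · -- non-collinear case
      push_neg at hline
      obtain ⟨c, hcF, hc⟩ := hline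
      set u₁ := b - a with hu₁def
      set u₂ := c - a with hu₂def
      have hu₁ : u₁ ≠ 0 := sub_ne_zero.2 (Ne.symm hab)
      have hu₂ : u₂ ≠ 0 := by
        intro h
        exact hc 0 (by rw [sub_eq_zero.1 h]; simp)
      have hnotmul : ∀ r : ℝ, u₂ ≠ r • u₁ := by
        intro r h
        apply hc r
        rw [← h, hu₂def]
        abel
      have hkey : ∃ g₀ g₁ : Fin d → ℝ,
          B g₀ u₁ = 1 ∧ B g₀ u₂ = 0 ∧ B g₁ u₁ = 0 ∧ B g₁ u₂ = 1 := by
        have hsym : B u₂ u₁ = B u₁ u₂ := B_comm u₂ u₁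
        have hss : 0 < B u₂ u₂ :=
          (B_self_nonneg u₂).lt_of_ne fun h => hu₂ (eq_zero_of_B_self u₂ h.symm)
        have hqq : 0 < B u₁ u₁ :=
          (B_self_nonneg u₁).lt_of_ne fun h => hu₁ (eq_zero_of_B_self u₁ h.symm)
        have hcomp : B (B u₂ u₂ • u₁ - B u₁ u₂ • u₂) (B u₂ u₂ • u₁ - B u₁ u₂ • u₂)
            = B u₂ u₂ * (B u₁ u₁ * B u₂ u₂ - B u₁ u₂ * B u₁ u₂) := by
          simp only [B_sub_left, B_sub_right, B_smul_left, B_smul_right, hsym]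
          ring
        have hDpos : 0 < B u₁ u₁ * B u₂ u₂ - B u₁ u₂ * B u₁ u₂ := by
          rcases lt_trichotomy (B u₁ u₁ * B u₂ u₂ - B u₁ u₂ * B u₁ u₂) 0 with h | h | h
          · exfalso
            have := B_self_nonneg (B u₂ u₂ • u₁ - B u₁ u₂ • u₂)
            nlinarith
          · exfalso
            have hw0 : B u₂ u₂ • u₁ - B u₁ u₂ • u₂ = 0 := by
              apply eq_zero_of_B_self
              rw [hcomp, h, mul_zero]
            have heq : B u₂ u₂ • u₁ = B u₁ u₂ • u₂ := by rwa [sub_eq_zero] at hw0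
            have hrr : B u₁ u₂ ≠ 0 := by
              intro h0
              rw [h0, zero_smul] at heq
              rcases smul_eq_zero.1 heq with h' | h'
              · exact hss.ne' h'
              · exact hu₁ h'
            apply hnotmul ((B u₁ u₂)⁻¹ * B u₂ u₂)
            rw [mul_smul, heq, inv_smul_smul₀ hrr]
          · exact h
        have hDne : B u₁ u₁ * B u₂ u₂ - B u₁ u₂ * B u₁ u₂ ≠ 0 := hDpos.ne'
        have hDne' : B u₁ u₁ * B u₂ u₂ - B u₁ u₂ ^ 2 ≠ 0 := by rw [sq]; exact hDne
        refine ⟨(B u₁ u₁ * B u₂ u₂ - B u₁ u₂ * B u₁ u₂)⁻¹ • (B u₂ u₂ • u₁ - B u₁ u₂ • u₂),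
          (B u₁ u₁ * B u₂ u₂ - B u₁ u₂ * B u₁ u₂)⁻¹ • (B u₁ u₁ • u₂ - B u₁ u₂ • u₁),
          ?_, ?_, ?_, ?_⟩ <;>
          simp only [B_smul_left, B_sub_left, B_smul_left, hsym] <;>
          field_simp <;> ring
      obtain ⟨g₀, g₁, hg₀₁, hg₀₂, hg₁₁, hg₁₂⟩ := hkey
      by_cases htie : ∃ g : Fin d → ℝ, (B g u₁ ≠ 0 ∨ B g u₂ ≠ 0) ∧
          ∃ x ∈ F, ∃ y ∈ F, x ≠ y ∧ B g x = B g y ∧ ∀ z ∈ F, B g z ≤ B g x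
      · obtain ⟨g, hα, x, hxF, y, hyF, hxy, hxyeq, hmax⟩ := htie
        set M := B g x with hM
        set S := F.filter (fun z => B g z = M) with hSdef
        have hS : ∀ z, z ∈ S ↔ z ∈ F ∧ B g z = M := fun z => Finset.mem_filter
        have hxS : x ∈ S := (hS x).2 ⟨hxF, rfl⟩
        have hyS : y ∈ S := (hS y).2 ⟨hyF, hxyeq.symm⟩
        have hSsub : S ⊆ F := Finset.filter_subset _ _
        have hwit : ∃ z ∈ F, z ∉ S := by
          have hpair : ∃ z₁ z₂, z₁ ∈ F ∧ z₂ ∈ F ∧ B g z₁ ≠ B g z₂ := by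
            rcases hα with h | h
            · refine ⟨b, a, hb, ha, fun heq => h ?_⟩
              rw [hu₁def, B_sub_right, heq, sub_self]
            · refine ⟨c, a, hcF, ha, fun heq => h ?_⟩
              rw [hu₂def, B_sub_right, heq, sub_self]
          obtain ⟨z₁, z₂, hz₁, hz₂, hzne⟩ := hpair
          rcases eq_or_ne (B g z₁) M with h1 | h1
          · exact ⟨z₂, hz₂, fun hzS => hzne (h1.trans ((hS z₂).1 hzS).2.symm)⟩
          · exact ⟨z₁, hz₁, fun hzS => h1 ((hS z₁).1 hzS).2⟩
        obtain ⟨z, hzF, hzS⟩ := hwit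
        have hSlt : S.card < F.card :=
          Finset.card_lt_card ((Finset.ssubset_iff_of_subset hSsub).2 ⟨z, hzF, hzS⟩)
        obtain ⟨p, q, hpq, hext⟩ := ih S (by omega) x hxS y hyS hxy
        exact ⟨p, q, hpq, (face_isExtreme hmax hS).trans hext⟩
      · exfalso
        push_neg at htie
        have hF : F.Nonempty := ⟨a, ha⟩
        have hside1 : ∀ t ∈ Set.Icc (0:ℝ) 1, ∀ x ∈ F, ∀ y ∈ F, x ≠ y →
            B ((1-t) • g₀ + t • g₁) x = B ((1-t) • g₀ + t • g₁) y →
            ¬ (∀ z ∈ F, B ((1-t) • g₀ + t • g₁) z ≤ B ((1-t) • g₀ + t • g₁) x) := by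
          intro t _ x hxF y hyF hxy heq hmax
          have hcond : B ((1-t) • g₀ + t • g₁) u₁ ≠ 0 ∨ B ((1-t) • g₀ + t • g₁) u₂ ≠ 0 := by
            simp only [B_add_left, B_smul_left, hg₀₁, hg₀₂, hg₁₁, hg₁₂, mul_one, mul_zero,
              add_zero, zero_add]
            rcases eq_or_ne t 1 with rfl | hne
            · right; norm_num
            · left
              intro h
              exact hne (by linarith [sub_eq_zero.1 h])
          obtain ⟨z, hzF, hlt⟩ := htie _ hcond x hxF y hyF hxy heq
          exact absurd (hmax z hzF) (not_le.2 hlt)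
        obtain ⟨w₀, hw₀F, hw₀L, hw₀R⟩ := path_strictMax hF g₀ g₁ hside1
        have hside2 : ∀ t ∈ Set.Icc (0:ℝ) 1, ∀ x ∈ F, ∀ y ∈ F, x ≠ y →
            B ((1-t) • g₁ + t • (-g₀)) x = B ((1-t) • g₁ + t • (-g₀)) y →
            ¬ (∀ z ∈ F, B ((1-t) • g₁ + t • (-g₀)) z ≤ B ((1-t) • g₁ + t • (-g₀)) x) := by
          intro t _ x hxF y hyF hxy heq hmax
          have hcond : B ((1-t) • g₁ + t • (-g₀)) u₁ ≠ 0
              ∨ B ((1-t) • g₁ + t • (-g₀)) u₂ ≠ 0 := by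
            simp only [B_add_left, B_smul_left, B_neg_left, hg₀₁, hg₀₂, hg₁₁, hg₁₂,
              mul_one, mul_zero, add_zero, zero_add, mul_neg, neg_zero]
            rcases eq_or_ne t 0 with rfl | hne
            · right; norm_num
            · left
              exact neg_ne_zero.2 hne
          obtain ⟨z, hzF, hlt⟩ := htie _ hcond x hxF y hyF hxy heq
          exact absurd (hmax z hzF) (not_le.2 hlt)
        obtain ⟨w₁, hw₁F, hw₁L, hw₁R⟩ := path_strictMax hF g₁ (-g₀) hside2
        have hww : w₀ = w₁ := by
          by_contra hne
          exact lt_asymm (hw₀R w₁ hw₁F (Ne.symm hne)) (hw₁L w₀ hw₀F hne)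
        subst hww
        have hz : ∃ z ∈ F, z ≠ w₀ := by
          rcases eq_or_ne a w₀ with rfl | hne
          · exact ⟨b, hb, fun h => hab (h ▸ rfl)⟩
          · exact ⟨a, ha, hne⟩
        obtain ⟨z, hzF, hzne⟩ := hz
        have h1 := hw₀L z hzF hzne
        have h2 := hw₁R z hzF hzne
        rw [B_neg_left, B_neg_left] at h2
        linarith

end Stmt13Aux

/-- The (open) normal cone of a set `P ⊆ ℝ^d` at a vertex `v`: the linear functionals
maximized over `P` uniquely at `v`. -/
def openNormalCone {d : ℕ} (P : Set (Fin d → ℝ)) (v : Fin d → ℝ) : Set (Fin d → ℝ) :=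
  {h | ∀ x ∈ P, x ≠ v → ∑ i, h i * x i < ∑ i, h i * v i}

/-- The segment `[u,v]` (with `u ≠ v`) is an edge (1-dimensional face / extreme set)
of the convex set `P`. -/
def IsEdgeOf {d : ℕ} (P : Set (Fin d → ℝ)) (u v : Fin d → ℝ) : Prop :=
  u ≠ v ∧ IsExtreme ℝ P (segment ℝ u v)

open Stmt13Aux in
/-- If the finite set `E` contains a direction of every edge of the polytope `P`, then
the zonotope `zone(E) = Σ_{e ∈ E} [-e,e]` refines `P`: every vertex normal cone of the
zonotope is contained in a vertex normal cone of `P`. -/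
theorem stmt_13 (d m : ℕ) (A : Finset (Fin d → ℝ)) (hA : A.Nonempty)
    (P : Set (Fin d → ℝ)) (hP : P = convexHull ℝ (A : Set (Fin d → ℝ)))
    (e : Fin m → (Fin d → ℝ))
    (hdir : ∀ u v : Fin d → ℝ, IsEdgeOf P u v →
      ∃ (i : Fin m) (c : ℝ), c ≠ 0 ∧ u - v = c • e i)
    (Z : Set (Fin d → ℝ))
    (hZ : Z = {x | ∃ lam : Fin m → ℝ,
      (∀ i, lam i ∈ Set.Icc (-1 : ℝ) 1) ∧ x = ∑ i, lam i • e i}) :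
    ∀ u ∈ Set.extremePoints ℝ Z, ∃ v ∈ Set.extremePoints ℝ P,
      openNormalCone Z u ⊆ openNormalCone P v := by
  classical
  intro u hu
  have hPcomp : IsCompact P := by rw [hP]; exact A.finite_toSet.isCompact_convexHull (𝕜 := ℝ)
  have hPne : P.Nonempty := by
    obtain ⟨a, haA⟩ := hA
    exact ⟨a, hP ▸ subset_convexHull ℝ _ haA⟩
  by_cases hCne : (openNormalCone Z u).Nonempty
  swap
  · obtain ⟨v, hv⟩ := hPcomp.extremePoints_nonempty hPne
    exact ⟨v, hv, fun h hh => absurd ⟨h, hh⟩ hCne⟩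
  -- Every functional in the normal cone has a unique maximizer over A
  have hkey : ∀ h ∈ openNormalCone Z u, ∃ a ∈ A, ∀ b ∈ A, b ≠ a → B h b < B h a := by
    intro h hh
    obtain ⟨a, haA, hamax⟩ := A.exists_max_image (fun z => B h z) hA
    refine ⟨a, haA, fun b hbA hba => ?_⟩
    rcases lt_or_eq_of_le (hamax b hbA) with h1 | h1
    · exact h1
    · exfalso
      set S := A.filter (fun z => B h z = B h a) with hSdef
      have hS : ∀ z, z ∈ S ↔ z ∈ A ∧ B h z = B h a := fun z => Finset.mem_filter
      have hbS : b ∈ S := (hS b).2 ⟨hbA, h1⟩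
      have haS : a ∈ S := (hS a).2 ⟨haA, rfl⟩
      obtain ⟨p, q, hpq, hext⟩ :=
        edge_exists A.card S (Finset.card_le_card (Finset.filter_subset _ _)) b hbS a haS hba
      have hPext : IsExtreme ℝ P (convexHull ℝ (S : Set (Fin d → ℝ))) := by
        rw [hP]
        exact face_isExtreme (fun z hz => hamax z hz) hS
      obtain ⟨i, c, hc0, hci⟩ := hdir p q ⟨hpq, hPext.trans hext⟩
      have hface := faceHull (g := h) (fun z hz => hamax z hz) hS
      have hBp : B h p = B h a := by
        have hpS : p ∈ convexHull ℝ (S : Set (Fin d → ℝ)) :=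
          hext.1 (left_mem_segment ℝ p q)
        rw [← hface] at hpS
        exact hpS.2
      have hBq : B h q = B h a := by
        have hqS : q ∈ convexHull ℝ (S : Set (Fin d → ℝ)) :=
          hext.1 (right_mem_segment ℝ p q)
        rw [← hface] at hqS
        exact hqS.2
      have hBe : B h (e i) = 0 := by
        have h0 : B h (p - q) = 0 := by rw [B_sub_right, hBp, hBq, sub_self]
        rw [hci, B_smul_right] at h0
        rcases mul_eq_zero.1 h0 with h' | h'
        · exact absurd h' hc0
        · exact h'
      have hei : e i ≠ 0 := by
        intro h0
        apply hpq
        rw [h0, smul_zero] at hci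
        exact sub_eq_zero.1 hci
      have huZ : u ∈ Z := hu.1
      rw [hZ] at huZ
      obtain ⟨lam, hlam, hlamu⟩ := huZ
      set t : ℝ := if 0 ≤ lam i then -1 else 1 with htdef
      have ht1 : t ∈ Set.Icc (-1:ℝ) 1 := by
        rw [htdef]; split <;> norm_num
      have htne : t ≠ lam i := by
        rcases le_or_gt 0 (lam i) with h' | h'
        · rw [htdef, if_pos h']
          intro h0
          linarith
        · rw [htdef, if_neg (not_le.2 h')]
          intro h0
          linarith
      have hxZ : u + (t - lam i) • e i ∈ Z := by
        rw [hZ]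
        refine ⟨Function.update lam i t, ?_, ?_⟩
        · intro j
          rcases eq_or_ne j i with rfl | hj
          · rw [Function.update_self]; exact ht1
          · rw [Function.update_of_ne hj]; exact hlam j
        · have hsplit : ∀ f : Fin m → ℝ, ∑ j, f j • e j
              = f i • e i + ∑ j ∈ Finset.univ.erase i, f j • e j :=
            fun f => (Finset.add_sum_erase _ _ (Finset.mem_univ i)).symm
        
          have hupdsum : ∑ j, Function.update lam i t j • e j
              = t • e i + ∑ j ∈ Finset.univ.erase i, lam j • e j := by
            rw [hsplit (Function.update lam i t), Function.update_self]
            congr 1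
            exact Finset.sum_congr rfl fun j hj => by
              rw [Function.update_of_ne (Finset.mem_erase.1 hj).1]
          rw [hupdsum, hlamu, hsplit lam]
          module
      have hxne : u + (t - lam i) • e i ≠ u := by
        intro h0
        exact (smul_ne_zero (sub_ne_zero.2 htne) hei) (add_eq_left.1 h0)
      have hlt : B h (u + (t - lam i) • e i) < B h u := hh _ hxZ hxne
      have heqB : B h (u + (t - lam i) • e i) = B h u := by
        rw [B_add_right, B_smul_right, hBe, mul_zero, add_zero]
      linarith
  -- The normal cone is convex, hence preconnected
  have hCconv : Convex ℝ (openNormalCone Z u) := by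
    intro h₁ h1 h₂ h2 s t hs ht hst
    intro x hx hxu
    have k1 : B h₁ x < B h₁ u := h1 x hx hxu
    have k2 : B h₂ x < B h₂ u := h2 x hx hxu
    have hgoal : s * B h₁ x + t * B h₂ x < s * B h₁ u + t * B h₂ u := by
      rcases lt_or_eq_of_le hs with hs' | hs'
      · exact add_lt_add_of_lt_of_le (mul_lt_mul_of_pos_left k1 hs')
          (mul_le_mul_of_nonneg_left k2.le ht)
      · have ht' : 0 < t := by rw [← hs'] at hst; linarith
        exact add_lt_add_of_le_of_lt (mul_le_mul_of_nonneg_left k1.le hs)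
          (mul_lt_mul_of_pos_left k2 ht')
    show B (s • h₁ + t • h₂) x < B (s • h₁ + t • h₂) u
    rw [B_add_left, B_smul_left, B_smul_left, B_add_left, B_smul_left, B_smul_left]
    exact hgoal
  -- the open sets indexed by candidate vertices
  set U : (Fin d → ℝ) → Set (Fin d → ℝ) :=
    fun a => ⋂ b ∈ A.erase a, {h | B h b < B h a} with hU
  have hmemU : ∀ a h, h ∈ U a ↔ ∀ b ∈ A, b ≠ a → B h b < B h a := by
    intro a h
    simp only [hU, Set.mem_iInter, Set.mem_setOf_eq, Finset.mem_erase]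
    exact ⟨fun h' x hx hne => h' x ⟨hne, hx⟩, fun h' x hx => h' x hx.2 hx.1⟩
  have hopen : ∀ a ∈ A, IsOpen (U a) := by
    intro a _
    exact isOpen_biInter_finset fun x _ =>
      isOpen_lt (continuous_B_left x) (continuous_B_left a)
  have hdisj : ∀ a ∈ A, ∀ a' ∈ A, a ≠ a' → Disjoint (U a) (U a') := by
    intro a haA a' ha'A hne
    refine Set.disjoint_left.2 fun h hma hma' => ?_
    exact lt_asymm ((hmemU a h).1 hma a' ha'A (Ne.symm hne))
      ((hmemU a' h).1 hma' a haA hne)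
  have hcov : openNormalCone Z u ⊆ ⋃ a ∈ A, U a := by
    intro h hh
    obtain ⟨a, haA, hstr⟩ := hkey h hh
    exact Set.mem_biUnion haA ((hmemU a h).2 hstr)
  obtain ⟨h₀, hh₀⟩ := hCne
  obtain ⟨a₀, ha₀A, hstr₀⟩ := hkey h₀ hh₀
  have hCsub : openNormalCone Z u ⊆ U a₀ :=
    preconnected_subset_of_disjoint_open hCconv.isPreconnected A U hopen hdisj hcov ha₀A
      ⟨h₀, hh₀, (hmemU a₀ h₀).2 hstr₀⟩
  have ha₀P : a₀ ∈ P := hP ▸ subset_convexHull ℝ _ ha₀A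
  refine ⟨a₀, ?_, ?_⟩
  · exact extreme_of_strict ha₀P fun x hx hxa =>
      strict_hull ha₀A hstr₀ x (hP ▸ hx) hxa
  · intro h hh
    have hstr : ∀ b ∈ A, b ≠ a₀ → B h b < B h a₀ := (hmemU a₀ h).1 (hCsub hh)
    exact fun x hx hxa => strict_hull ha₀A hstr x (hP ▸ hx) hxa
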